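/- Let S: ℝ → U(ℂᴺ ⊗ ℂᴺ) be a matrix-valued function of the form S(θ) = -F · exp(2iρ(θ)), where F is the flip operator F(u⊗v) = v⊗u, ρ: ℝ → L(ℂᴺ⊗ℂᴺ) is continuous with ρ(0) = 0, ρ(-θ) = -ρ(θ), conj-transpose ρ(θ)* = ρ(θ), and [F, ρ(θ)] = 0 for all θ. Define on L²(ℝ²) ⊗ (ℂᴺ)⊗² the operators (D₂(τ)Ψ)(θ₁,θ₂) := S(θ₂-θ₁)·Ψ(θ₂,θ₁), (D₂⁻(τ)Ψ)(θ₁,θ₂) := -F·Ψ(θ₂,θ₁), and the multiplication operator (𝓘₂Ψ)(θ₁,θ₂) := -exp(iρ(θ₁-θ₂))·Ψ(θ₁,θ₂). Then 𝓘₂ is unitary and intertwines: 𝓘₂ ∘ D₂(τ) = D₂⁻(τ) ∘ 𝓘₂. -/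

import Mathlib

open Complex ContinuousLinearMap

/-- The two-particle space `ℂᴺ ⊗ ℂᴺ`, realized as `EuclideanSpace ℂ (Fin N × Fin N)`. -/
abbrev TwoParticle (N : ℕ) := EuclideanSpace ℂ (Fin N × Fin N)

set_option maxHeartbeats 1000000

/-- For `S(θ) = -F e^{2iρ(θ)}` with a self-adjoint phase-shift matrix `ρ`
commuting with the flip `F`, `ρ(0) = 0`, `ρ(-θ) = -ρ(θ)`, the multiplication
operator `(𝓘₂Ψ)(θ₁,θ₂) = -e^{iρ(θ₁-θ₂)} Ψ(θ₁,θ₂)` is unitary and intertwines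
`(D₂(τ)Ψ)(θ₁,θ₂) = S(θ₂-θ₁)Ψ(θ₂,θ₁)` with `(D₂⁻(τ)Ψ)(θ₁,θ₂) = -F Ψ(θ₂,θ₁)`,
i.e. `𝓘₂ ∘ D₂(τ) = D₂⁻(τ) ∘ 𝓘₂` (stated pointwise). -/
theorem stmt16 (N : ℕ)
    (F : TwoParticle N →L[ℂ] TwoParticle N)
    (hF : ∀ (v : TwoParticle N) (i j : Fin N), F v (i, j) = v (j, i))
    (ρ : ℝ → (TwoParticle N →L[ℂ] TwoParticle N))
    (hρcont : Continuous ρ) (hρ0 : ρ 0 = 0) (hρodd : ∀ θ : ℝ, ρ (-θ) = -ρ θ)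
    (hρsa : ∀ θ : ℝ, ContinuousLinearMap.adjoint (ρ θ) = ρ θ)
    (hρF : ∀ θ : ℝ, F ∘L ρ θ = ρ θ ∘L F)
    (S : ℝ → (TwoParticle N →L[ℂ] TwoParticle N))
    (hS : ∀ θ : ℝ, S θ = -(F ∘L NormedSpace.exp ((2 * Complex.I) • ρ θ))) :
    (∀ θ : ℝ,
      ContinuousLinearMap.adjoint (NormedSpace.exp (Complex.I • ρ θ)) ∘L
          NormedSpace.exp (Complex.I • ρ θ) = 1 ∧
      NormedSpace.exp (Complex.I • ρ θ) ∘L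
          ContinuousLinearMap.adjoint (NormedSpace.exp (Complex.I • ρ θ)) = 1) ∧
    ∀ (Ψ : ℝ × ℝ → TwoParticle N) (θ₁ θ₂ : ℝ),
      -(NormedSpace.exp (Complex.I • ρ (θ₁ - θ₂)) ((S (θ₂ - θ₁)) (Ψ (θ₂, θ₁))))
        = -(F (-(NormedSpace.exp (Complex.I • ρ (θ₂ - θ₁)) (Ψ (θ₂, θ₁))))) := by
  have hexp : ∀ x y : TwoParticle N →L[ℂ] TwoParticle N, Commute x y →
      NormedSpace.exp (x + y) = NormedSpace.exp x * NormedSpace.exp y := fun x y h =>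
    NormedSpace.exp_add_of_commute_of_mem_ball (𝕂 := ℂ) h
      ((NormedSpace.expSeries_radius_eq_top ℂ (TwoParticle N →L[ℂ] TwoParticle N)).symm ▸ edist_lt_top _ _)
      ((NormedSpace.expSeries_radius_eq_top ℂ (TwoParticle N →L[ℂ] TwoParticle N)).symm ▸ edist_lt_top _ _)
  have hadj : ∀ θ : ℝ, ContinuousLinearMap.adjoint (NormedSpace.exp (Complex.I • ρ θ))
      = NormedSpace.exp (-(Complex.I • ρ θ)) := by
    intro θ
    rw [← ContinuousLinearMap.star_eq_adjoint, NormedSpace.star_exp]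
    congr 1
    rw [star_smul, ContinuousLinearMap.star_eq_adjoint, hρsa, RCLike.star_def, Complex.conj_I,
      neg_smul]
  have hmul : ∀ θ : ℝ, NormedSpace.exp (-(Complex.I • ρ θ)) * NormedSpace.exp (Complex.I • ρ θ) = 1 := by
    intro θ
    rw [← hexp _ _ ((Commute.refl _).neg_left), neg_add_cancel,
      NormedSpace.exp_zero]
  have hmul' : ∀ θ : ℝ, NormedSpace.exp (Complex.I • ρ θ) * NormedSpace.exp (-(Complex.I • ρ θ)) = 1 := by
    intro θ
    rw [← hexp _ _ ((Commute.refl _).neg_right), add_neg_cancel,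
      NormedSpace.exp_zero]
  constructor
  · intro θ
    rw [hadj]
    exact ⟨hmul θ, hmul' θ⟩
  · intro Ψ θ₁ θ₂
    set a := ρ (θ₂ - θ₁) with ha
    have h12 : ρ (θ₁ - θ₂) = -a := by rw [← hρodd, neg_sub]
    set v := Ψ (θ₂, θ₁) with hv
    have hFa : Commute F a := hρF (θ₂ - θ₁)
    have hFcomm : ∀ c : ℂ, F * NormedSpace.exp (c • a) = NormedSpace.exp (c • a) * F :=
      fun c => ((hFa.smul_right c).exp_right)
    rw [hS, h12]
    simp only [ContinuousLinearMap.neg_apply, ContinuousLinearMap.comp_apply, neg_neg, map_neg]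
    have step1 : NormedSpace.exp (Complex.I • (-a)) (F (NormedSpace.exp ((2 * Complex.I) • a) v))
        = F (NormedSpace.exp (Complex.I • (-a)) (NormedSpace.exp ((2 * Complex.I) • a) v)) := by
      have h' : Complex.I • (-a) = (-Complex.I) • a := by rw [smul_neg, ← neg_smul]
      rw [h']
      exact congrFun (congrArg (DFunLike.coe) (hFcomm (-Complex.I)).symm)
        (NormedSpace.exp ((2 * Complex.I) • a) v)
    rw [step1]
    congr 1
    have key : NormedSpace.exp (Complex.I • (-a)) * NormedSpace.exp ((2 * Complex.I) • a)
        = NormedSpace.exp (Complex.I • a) := by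
      have hc : Commute (Complex.I • (-a)) ((2 * Complex.I) • a) :=
        (((Commute.refl a).neg_left.smul_left _).smul_right _)
      rw [← hexp _ _ hc]
      congr 1
      module
    exact congrFun (congrArg (DFunLike.coe) key) v
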